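/- For every integer n ≥ 1, T((F_{6n−1} − 1)/4, F_{6n}/2, F_{6n}/2) − T((F_{6n+2} − 1)/4, F_{6n}/2, F_{6n}/2) = 2n. (Here F_{6n} is even and F_{6n−1} ≡ F_{6n+2} ≡ 1 (mod 4), so all arguments are integers.) -/

import Mathlib

/-- `γ = (3 − √5)/2`. -/
noncomputable def gam : ℝ := (3 - Real.sqrt 5) / 2

/-- The infinite Fibonacci word `f_i = ⌊(i+2)γ⌋ − ⌊(i+1)γ⌋`, so `f = 0100101⋯`. -/
noncomputable def fw (i : ℕ) : ℤ :=
  ⌊((i : ℝ) + 2) * gam⌋ - ⌊((i : ℝ) + 1) * gam⌋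

/-- `T(i,m,n) = ∑_{k<m} ∑_{ℓ<n} f_{i+k+ℓ}`. -/
noncomputable def fwT (i m n : ℕ) : ℤ :=
  ∑ k ∈ Finset.range m, ∑ l ∈ Finset.range n, fw (i + k + l)

/- basic facts about gam -/
lemma sqrt5_sq : Real.sqrt 5 ^ 2 = 5 := Real.sq_sqrt (by norm_num)
lemma sqrt5_pos : 0 < Real.sqrt 5 := Real.sqrt_pos.2 (by norm_num)
lemma sqrt5_lt : Real.sqrt 5 < 3 := by
  nlinarith [sqrt5_sq, sqrt5_pos]
lemma sqrt5_gt : 2 < Real.sqrt 5 := by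
  nlinarith [sqrt5_sq, sqrt5_pos]

lemma gam_pos : 0 < gam := by unfold gam; linarith [sqrt5_lt]
lemma gam_lt_one : gam < 1 := by unfold gam; linarith [sqrt5_gt]
lemma gam_inv : gam * (3 - gam) = 1 := by
  unfold gam; nlinarith [sqrt5_sq]

lemma gam_irr : Irrational gam := by
  have h5 : Irrational (Real.sqrt 5) := Nat.prime_five.irrational_sqrt
  have h1 : Irrational ((3 : ℤ) - Real.sqrt 5) := h5.intCast_sub 3
  have h2 : Irrational (((3 : ℤ) - Real.sqrt 5) / (2 : ℤ)) := h1.div_intCast (by norm_num)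
  convert h2 using 2 <;> norm_num [gam]

/-- floor of k*gam -/
noncomputable def fl (k : ℕ) : ℤ := ⌊(k : ℝ) * gam⌋

noncomputable def DD (K : ℕ) : ℤ := ∑ k ∈ Finset.range (K + 1), fl k

lemma fl_zero : fl 0 = 0 := by simp [fl]

lemma fl_nonneg (k : ℕ) : 0 ≤ fl k := by
  apply Int.le_floor.2
  push_cast
  exact mul_nonneg (Nat.cast_nonneg k) gam_pos.le

lemma DD_succ (K : ℕ) : DD (K + 1) = DD K + fl (K + 1) := by
  simp [DD, Finset.sum_range_succ]

lemma fl_irr (k : ℕ) (hk : 1 ≤ k) : Irrational ((k : ℝ) * gam) :=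
  gam_irr.natCast_mul (by omega)

/-- main floor evaluation criterion -/
lemma floor_eval (K : ℕ) (J : ℤ) (h0 : 0 ≤ 3 * (K : ℤ) - 2 * J)
    (h1 : (3 * (K : ℤ) - 2 * J - 2) ^ 2 < 5 * (K : ℤ) ^ 2)
    (h2 : 5 * (K : ℤ) ^ 2 < (3 * (K : ℤ) - 2 * J) ^ 2) :
    fl K = J := by
  have hs := sqrt5_sq
  have hsp := sqrt5_pos.le
  have hKn : (0 : ℝ) ≤ (K : ℝ) := Nat.cast_nonneg K
  -- upper : K*sqrt5 < 3K - 2J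
  have hA : (K : ℝ) * Real.sqrt 5 < 3 * K - 2 * J := by
    have h2' : 5 * (K : ℝ) ^ 2 < (3 * K - 2 * J) ^ 2 := by exact_mod_cast h2
    have h0' : (0 : ℝ) ≤ 3 * K - 2 * J := by exact_mod_cast h0
    nlinarith [mul_nonneg hKn hsp]
  -- lower : 3K - 2J - 2 < K*sqrt5
  have hB : 3 * (K : ℝ) - 2 * J - 2 < K * Real.sqrt 5 := by
    have h1' : (3 * (K : ℝ) - 2 * J - 2) ^ 2 < 5 * (K : ℝ) ^ 2 := by exact_mod_cast h1
    rcases le_or_gt (3 * (K : ℝ) - 2 * J - 2) 0 with h | h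
    · have : 0 < (K : ℝ) * Real.sqrt 5 ∨ (K:ℝ) * Real.sqrt 5 = 0 := by
        rcases eq_or_lt_of_le (mul_nonneg hKn hsp) with h' | h'
        · exact Or.inr h'.symm
        · exact Or.inl h'
      rcases this with h' | h'
      · linarith
      · -- K * sqrt5 = 0 → K = 0 → h1' : (−2J−2)^2 < 0 contradiction unless...
        have hK0 : (K : ℝ) = 0 := by
          rcases mul_eq_zero.1 h' with h'' | h''
          · exact h''
          · exfalso; exact (ne_of_gt sqrt5_pos) h''
        rw [hK0] at h1'
        nlinarith [h1']
    · nlinarith [mul_nonneg hKn hsp]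
  unfold fl gam
  rw [Int.floor_eq_iff]
  constructor
  · push_cast
    nlinarith [hA]
  · push_cast
    nlinarith [hB]

lemma fl_step (K : ℕ) : fl (K + 1) = fl K ∨ fl (K + 1) = fl K + 1 := by
  have h1 : fl K ≤ fl (K + 1) := by
    apply Int.floor_le_floor
    have := gam_pos
    push_cast
    nlinarith
  have h2 : fl (K + 1) ≤ fl K + 1 := by
    have : ((K : ℝ) + 1) * gam < (K * gam) + 1 := by nlinarith [gam_lt_one, gam_pos, Nat.cast_nonneg (α := ℝ) K]
    have h3 : fl (K+1) ≤ ⌊(K : ℝ) * gam + 1⌋ := by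
      apply Int.floor_le_floor
      push_cast
      linarith
    simpa [fl, Int.floor_add_one] using h3
  omega

/-- key: if floor jumps at K+1, then fl (J) = 3*J - (K+1) where J = fl (K+1) viewed in ℕ -/
lemma fl_jump (K : ℕ) (J : ℕ) (hJ : (J : ℤ) = fl (K + 1)) (hjump : fl (K + 1) = fl K + 1) :
    fl J = 3 * (J : ℤ) - (K + 1) := by
  have hgp := gam_pos
  have hgl := gam_lt_one
  have hinv := gam_inv
  -- J ≤ (K+1) gam, strict by irrationality
  have h1 : (J : ℝ) ≤ ((K : ℝ) + 1) * gam := by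
    have h := Int.floor_le (((K + 1 : ℕ) : ℝ) * gam)
    have hc : ((fl (K+1) : ℤ) : ℝ) ≤ ((K + 1 : ℕ) : ℝ) * gam := h
    rw [← hJ] at hc
    push_cast at hc
    push_cast
    linarith
  have hirr : Irrational (((K : ℝ) + 1) * gam) := by
    have := fl_irr (K + 1) (by omega)
    push_cast at this ⊢
    exact this
  have h1s : (J : ℝ) < ((K : ℝ) + 1) * gam := by
    rcases eq_or_lt_of_le h1 with h | h
    · exact absurd (by push_cast; linarith [h] : ((K : ℝ) + 1) * gam = ((J : ℤ) : ℝ)) (hirr.ne_int J)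
    · exact h
  -- K gam < J
  have h2 : (K : ℝ) * gam < J := by
    have hf : fl K = (J : ℤ) - 1 := by omega
    have := Int.lt_floor_add_one ((K : ℝ) * gam)
    rw [fl] at hf
    rw [hf] at this
    push_cast at this
    linarith
  -- multiply h1s by (3 - gam) > 0 : J*(3-gam) < K+1
  have h3g : (0:ℝ) < 3 - gam := by linarith
  have h3 : (J : ℝ) * (3 - gam) < (K : ℝ) + 1 := by
    have := mul_lt_mul_of_pos_right h1s h3g
    calc (J : ℝ) * (3 - gam) < ((K : ℝ) + 1) * gam * (3 - gam) := this
      _ = (K : ℝ) + 1 := by rw [mul_assoc, hinv, mul_one]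
  -- from h2: (K+1) gam < J + gam ; multiply by (3-gam): K+1 < J(3-gam) + 1
  have h4 : (K : ℝ) + 1 < (J : ℝ) * (3 - gam) + 1 := by
    have h2' : ((K : ℝ) + 1) * gam < ((J : ℝ) + 1 * gam) := by ring_nf; nlinarith [h2]
    have := mul_lt_mul_of_pos_right h2' h3g
    have he : (((K : ℝ) + 1) * gam) * (3 - gam) = (K : ℝ) + 1 := by
      rw [mul_assoc, hinv, mul_one]
    nlinarith [this, he, hinv]
  -- now floor of J*gam
  unfold fl
  rw [Int.floor_eq_iff]
  constructor
  · push_cast; nlinarith [h3]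
  · push_cast; nlinarith [h4]

/-- reciprocity / recursion for DD -/
lemma DD_rec : ∀ (K J : ℕ), (J : ℤ) = fl K →
    2 * DD K = 2 * DD J + 2 * K * J - 3 * (J : ℤ) ^ 2 - J := by
  intro K
  induction K with
  | zero =>
    intro J hJ
    have : J = 0 := by have := fl_zero; omega
    subst this
    ring
  | succ K ih =>
    intro J hJ
    have hKnn := fl_nonneg K
    set Jk : ℕ := (fl K).toNat with hJk
    have hJkc : (Jk : ℤ) = fl K := Int.toNat_of_nonneg hKnn
    have hih := ih Jk hJkc
    rcases fl_step K with h | h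
    · -- J = Jk
      have : (J : ℤ) = (Jk : ℤ) := by rw [hJ, h, hJkc]
      have hJJ : J = Jk := by exact_mod_cast this
      subst hJJ
      rw [DD_succ, ← hJ]
      push_cast
      push_cast at hih
      linarith [hih]
    · -- J = Jk + 1
      have hJc : (J : ℤ) = (Jk : ℤ) + 1 := by rw [hJ, h, hJkc]
      have hJJ : J = Jk + 1 := by exact_mod_cast hJc
      subst hJJ
      have hkey := fl_jump K (Jk + 1) (by push_cast; omega) h
      rw [DD_succ, DD_succ, ← hJ]
      push_cast
      push_cast at hih hkey
      linarith [hih, hkey]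

lemma DD_chunk (a m : ℕ) : ∑ k ∈ Finset.range m, fl (a + 1 + k) = DD (a + m) - DD a := by
  induction m with
  | zero => simp
  | succ m ih =>
    rw [Finset.sum_range_succ, ih, ← add_assoc, DD_succ]
    ring_nf

lemma fwT_eq (i m : ℕ) : fwT i m m = DD (i + 2 * m) - 2 * DD (i + m) + DD i := by
  unfold fwT
  have hinner : ∀ k, ∑ l ∈ Finset.range m, fw (i + k + l)
      = fl (i + k + m + 1) - fl (i + k + 1) := by
    intro k
    have step : ∀ l, fw (i + k + l) = (fun l => fl (i + k + l + 1)) (l + 1) - (fun l => fl (i + k + l + 1)) l := by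
      intro l
      simp only []
      unfold fw fl
      have e1 : (i + k + (l + 1) + 1 : ℕ) = i + k + l + 2 := by omega
      have e2 : (i + k + l + 1 : ℕ) = i + k + l + 1 := rfl
      rw [e1]
      push_cast
      ring_nf
    rw [Finset.sum_congr rfl (fun l _ => step l), Finset.sum_range_sub (fun l => fl (i + k + l + 1)) m]
  rw [Finset.sum_congr rfl (fun k _ => hinner k)]
  rw [Finset.sum_sub_distrib]
  have e1 : ∑ k ∈ Finset.range m, fl (i + k + m + 1) = DD (i + m + m) - DD (i + m) := by
    rw [← DD_chunk (i + m) m]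
    apply Finset.sum_congr rfl
    intro k _
    have e : (i + m + 1 + k : ℕ) = i + k + m + 1 := by omega
    rw [e]
  have e2 : ∑ k ∈ Finset.range m, fl (i + k + 1) = DD (i + m) - DD i := by
    rw [← DD_chunk i m]
    apply Finset.sum_congr rfl
    intro k _
    have e : (i + 1 + k : ℕ) = i + k + 1 := by omega
    rw [e]
  rw [e1, e2]
  have : i + m + m = i + 2 * m := by omega
  rw [this]
  ring

lemma beta_le (d e : ℤ) (hd : 0 ≤ d) (he : 2 ≤ e)
    (hC : 4*d^2 + 4*d*e - 4*e^2 + 10*d + 5*e + 6 = 0) : e ≤ 2*d + 2 := by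
  by_contra hcon
  push_neg at hcon
  nlinarith [hC, sq_nonneg (e - 2*d - 3), mul_nonneg hd (by linarith : (0:ℤ) ≤ e - 2*d - 3)]

lemma step (d e : ℕ) (he : 2 ≤ e)
    (hC : 4*(d:ℤ)^2 + 4*(d:ℤ)*(e:ℤ) - 4*(e:ℤ)^2 + 10*(d:ℤ) + 5*(e:ℤ) + 6 = 0) :
    DD (5*d + 8*e + 6) - 3 * DD (21*d + 34*e + 26) + 3 * DD (37*d + 60*e + 46) - DD (53*d + 86*e + 66)
      = DD (d + 1) - 3 * DD (d + 2*e + 1) + 3 * DD (d + 4*e + 1) - DD (d + 6*e + 1) + 2 := by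
  have hd : (0:ℤ) ≤ (d:ℤ) := Int.ofNat_nonneg d
  have he' : (2:ℤ) ≤ (e:ℤ) := by exact_mod_cast he
  have hba : (e:ℤ) ≤ 2*(d:ℤ) + 2 := beta_le _ _ hd he' hC
  have f0 : fl (5*d + 8*e + 6) = 2*(d:ℤ) + 3*(e:ℤ) + 2 := by
    apply floor_eval <;> push_cast <;> linarith [hC, hba, hd, he']
  have f1 : fl (2*d + 3*e + 2) = (d:ℤ) + (e:ℤ) + 1 := by
    apply floor_eval <;> push_cast <;> linarith [hC, hba, hd, he']
  have f2 : fl (d + e + 1) = (d:ℤ) + 1 := by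
    apply floor_eval <;> push_cast <;> linarith [hC, hba, hd, he']
  have f3 : fl (21*d + 34*e + 26) = 8*(d:ℤ) + 13*(e:ℤ) + 9 := by
    apply floor_eval <;> push_cast <;> linarith [hC, hba, hd, he']
  have f4 : fl (8*d + 13*e + 9) = 3*(d:ℤ) + 5*(e:ℤ) + 3 := by
    apply floor_eval <;> push_cast <;> linarith [hC, hba, hd, he']
  have f5 : fl (3*d + 5*e + 3) = (d:ℤ) + 2*(e:ℤ) := by
    apply floor_eval <;> push_cast <;> linarith [hC, hba, hd, he']
  have f6 : fl (37*d + 60*e + 46) = 14*(d:ℤ) + 23*(e:ℤ) + 17 := by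
    apply floor_eval <;> push_cast <;> linarith [hC, hba, hd, he']
  have f7 : fl (14*d + 23*e + 17) = 5*(d:ℤ) + 9*(e:ℤ) + 6 := by
    apply floor_eval <;> push_cast <;> linarith [hC, hba, hd, he']
  have f8 : fl (5*d + 9*e + 6) = (d:ℤ) + 4*(e:ℤ) + 1 := by
    apply floor_eval <;> push_cast <;> linarith [hC, hba, hd, he']
  have f9 : fl (53*d + 86*e + 66) = 20*(d:ℤ) + 33*(e:ℤ) + 24 := by
    apply floor_eval <;> push_cast <;> linarith [hC, hba, hd, he']
  have f10 : fl (20*d + 33*e + 24) = 7*(d:ℤ) + 13*(e:ℤ) + 8 := by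
    apply floor_eval <;> push_cast <;> linarith [hC, hba, hd, he']
  have f11 : fl (7*d + 13*e + 8) = (d:ℤ) + 6*(e:ℤ) := by
    apply floor_eval <;> push_cast <;> linarith [hC, hba, hd, he']
  have f12 : fl (d + 2*e + 1) = (e:ℤ) - 1 := by
    apply floor_eval <;> push_cast <;> linarith [hC, hba, hd, he']
  have f13 : fl (d + 6*e + 1) = -4*(d:ℤ) + 5*(e:ℤ) - 6 := by
    apply floor_eval <;> push_cast <;> linarith [hC, hba, hd, he']
  have r0 : 2 * DD (5*d + 8*e + 6) = 2 * DD (2*d + 3*e + 2) + 2 * ((5*d + 8*e + 6 : ℕ) : ℤ) * ((2*d + 3*e + 2 : ℕ) : ℤ) - 3 * ((2*d + 3*e + 2 : ℕ) : ℤ)^2 - ((2*d + 3*e + 2 : ℕ) : ℤ) :=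
    DD_rec _ _ (by rw [f0]; push_cast; ring)
  have r1 : 2 * DD (2*d + 3*e + 2) = 2 * DD (d + e + 1) + 2 * ((2*d + 3*e + 2 : ℕ) : ℤ) * ((d + e + 1 : ℕ) : ℤ) - 3 * ((d + e + 1 : ℕ) : ℤ)^2 - ((d + e + 1 : ℕ) : ℤ) :=
    DD_rec _ _ (by rw [f1]; push_cast; ring)
  have r2 : 2 * DD (d + e + 1) = 2 * DD (d + 1) + 2 * ((d + e + 1 : ℕ) : ℤ) * ((d + 1 : ℕ) : ℤ) - 3 * ((d + 1 : ℕ) : ℤ)^2 - ((d + 1 : ℕ) : ℤ) :=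
    DD_rec _ _ (by rw [f2]; push_cast; ring)
  have r3 : 2 * DD (21*d + 34*e + 26) = 2 * DD (8*d + 13*e + 9) + 2 * ((21*d + 34*e + 26 : ℕ) : ℤ) * ((8*d + 13*e + 9 : ℕ) : ℤ) - 3 * ((8*d + 13*e + 9 : ℕ) : ℤ)^2 - ((8*d + 13*e + 9 : ℕ) : ℤ) :=
    DD_rec _ _ (by rw [f3]; push_cast; ring)
  have r4 : 2 * DD (8*d + 13*e + 9) = 2 * DD (3*d + 5*e + 3) + 2 * ((8*d + 13*e + 9 : ℕ) : ℤ) * ((3*d + 5*e + 3 : ℕ) : ℤ) - 3 * ((3*d + 5*e + 3 : ℕ) : ℤ)^2 - ((3*d + 5*e + 3 : ℕ) : ℤ) :=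
    DD_rec _ _ (by rw [f4]; push_cast; ring)
  have r5 : 2 * DD (3*d + 5*e + 3) = 2 * DD (d + 2*e) + 2 * ((3*d + 5*e + 3 : ℕ) : ℤ) * ((d + 2*e : ℕ) : ℤ) - 3 * ((d + 2*e : ℕ) : ℤ)^2 - ((d + 2*e : ℕ) : ℤ) :=
    DD_rec _ _ (by rw [f5]; push_cast; ring)
  have r6 : 2 * DD (37*d + 60*e + 46) = 2 * DD (14*d + 23*e + 17) + 2 * ((37*d + 60*e + 46 : ℕ) : ℤ) * ((14*d + 23*e + 17 : ℕ) : ℤ) - 3 * ((14*d + 23*e + 17 : ℕ) : ℤ)^2 - ((14*d + 23*e + 17 : ℕ) : ℤ) :=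
    DD_rec _ _ (by rw [f6]; push_cast; ring)
  have r7 : 2 * DD (14*d + 23*e + 17) = 2 * DD (5*d + 9*e + 6) + 2 * ((14*d + 23*e + 17 : ℕ) : ℤ) * ((5*d + 9*e + 6 : ℕ) : ℤ) - 3 * ((5*d + 9*e + 6 : ℕ) : ℤ)^2 - ((5*d + 9*e + 6 : ℕ) : ℤ) :=
    DD_rec _ _ (by rw [f7]; push_cast; ring)
  have r8 : 2 * DD (5*d + 9*e + 6) = 2 * DD (d + 4*e + 1) + 2 * ((5*d + 9*e + 6 : ℕ) : ℤ) * ((d + 4*e + 1 : ℕ) : ℤ) - 3 * ((d + 4*e + 1 : ℕ) : ℤ)^2 - ((d + 4*e + 1 : ℕ) : ℤ) :=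
    DD_rec _ _ (by rw [f8]; push_cast; ring)
  have r9 : 2 * DD (53*d + 86*e + 66) = 2 * DD (20*d + 33*e + 24) + 2 * ((53*d + 86*e + 66 : ℕ) : ℤ) * ((20*d + 33*e + 24 : ℕ) : ℤ) - 3 * ((20*d + 33*e + 24 : ℕ) : ℤ)^2 - ((20*d + 33*e + 24 : ℕ) : ℤ) :=
    DD_rec _ _ (by rw [f9]; push_cast; ring)
  have r10 : 2 * DD (20*d + 33*e + 24) = 2 * DD (7*d + 13*e + 8) + 2 * ((20*d + 33*e + 24 : ℕ) : ℤ) * ((7*d + 13*e + 8 : ℕ) : ℤ) - 3 * ((7*d + 13*e + 8 : ℕ) : ℤ)^2 - ((7*d + 13*e + 8 : ℕ) : ℤ) :=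
    DD_rec _ _ (by rw [f10]; push_cast; ring)
  have r11 : 2 * DD (7*d + 13*e + 8) = 2 * DD (d + 6*e) + 2 * ((7*d + 13*e + 8 : ℕ) : ℤ) * ((d + 6*e : ℕ) : ℤ) - 3 * ((d + 6*e : ℕ) : ℤ)^2 - ((d + 6*e : ℕ) : ℤ) :=
    DD_rec _ _ (by rw [f11]; push_cast; ring)
  have s1 : DD (d + 2*e + 1) = DD (d + 2*e) + fl (d + 2*e + 1) := DD_succ _
  have s3 : DD (d + 6*e + 1) = DD (d + 6*e) + fl (d + 6*e + 1) := DD_succ _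
  rw [f12] at s1
  rw [f13] at s3
  push_cast at r0 r1 r2 r3 r4 r5 r6 r7 r8 r9 r10 r11
  linarith [r0, r1, r2, r3, r4, r5, r6, r7, r8, r9, r10, r11, s1, s3]

/- Fibonacci helper lemmas -/
lemma fib_add6 (m : ℕ) : Nat.fib (m + 6) = 5 * Nat.fib m + 8 * Nat.fib (m + 1) := by
  have h := Nat.fib_add m 5
  have e : m + 5 + 1 = m + 6 := by omega
  rw [e] at h
  rw [h]
  norm_num [Nat.fib]
  ring

lemma fib_add7 (m : ℕ) : Nat.fib (m + 7) = 8 * Nat.fib m + 13 * Nat.fib (m + 1) := by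
  have h := Nat.fib_add m 6
  have e : m + 6 + 1 = m + 7 := by omega
  rw [e] at h
  rw [h]
  norm_num [Nat.fib]
  ring

lemma fib_facts : ∀ k : ℕ, Nat.fib (6*k+5) % 4 = 1 ∧ Nat.fib (6*k+6) % 4 = 0 ∧
    5 ≤ Nat.fib (6*k+5) ∧ 8 ≤ Nat.fib (6*k+6) := by
  intro k
  induction k with
  | zero => norm_num [Nat.fib]
  | succ k ih =>
    have e5 : 6*(k+1)+5 = (6*k+5) + 6 := by omega
    have e6 : 6*(k+1)+6 = (6*k+5) + 7 := by omega
    have e1 : (6*k+5) + 1 = 6*k+6 := by omega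
    rw [e5, e6, fib_add6, fib_add7, e1]
    omega

lemma cassini : ∀ m : ℕ, ((Nat.fib m : ℤ))^2 + (Nat.fib m : ℤ) * (Nat.fib (m+1) : ℤ)
    - ((Nat.fib (m+1) : ℤ))^2 = -(-1:ℤ)^m := by
  intro m
  induction m with
  | zero => norm_num [Nat.fib]
  | succ m ih =>
    have e : m + 1 + 1 = m + 2 := rfl
    rw [e, Nat.fib_add_two]
    push_cast
    rw [pow_succ]
    ring_nf
    ring_nf at ih
    linarith [ih]

/- Base case : DD 1 - 3 DD 5 + 3 DD 9 - DD 13 = 2 -/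
lemma base_case : DD 1 - 3 * DD (0 + 2*2 + 1) + 3 * DD (0 + 4*2 + 1) - DD (0 + 6*2 + 1) = 2 := by
  have g1 : fl 1 = 0 := floor_eval 1 0 (by norm_num) (by norm_num) (by norm_num)
  have g2 : fl 2 = 0 := floor_eval 2 0 (by norm_num) (by norm_num) (by norm_num)
  have g3 : fl 3 = 1 := floor_eval 3 1 (by norm_num) (by norm_num) (by norm_num)
  have g4 : fl 4 = 1 := floor_eval 4 1 (by norm_num) (by norm_num) (by norm_num)
  have g5 : fl 5 = 1 := floor_eval 5 1 (by norm_num) (by norm_num) (by norm_num)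
  have g6 : fl 6 = 2 := floor_eval 6 2 (by norm_num) (by norm_num) (by norm_num)
  have g7 : fl 7 = 2 := floor_eval 7 2 (by norm_num) (by norm_num) (by norm_num)
  have g8 : fl 8 = 3 := floor_eval 8 3 (by norm_num) (by norm_num) (by norm_num)
  have g9 : fl 9 = 3 := floor_eval 9 3 (by norm_num) (by norm_num) (by norm_num)
  have g10 : fl 10 = 3 := floor_eval 10 3 (by norm_num) (by norm_num) (by norm_num)
  have g11 : fl 11 = 4 := floor_eval 11 4 (by norm_num) (by norm_num) (by norm_num)
  have g12 : fl 12 = 4 := floor_eval 12 4 (by norm_num) (by norm_num) (by norm_num)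
  have g13 : fl 13 = 4 := floor_eval 13 4 (by norm_num) (by norm_num) (by norm_num)
  norm_num [DD, Finset.sum_range_succ, fl_zero, g1, g2, g3, g4, g5, g6, g7, g8, g9, g10, g11, g12, g13]

lemma main_ind : ∀ k : ℕ,
    DD ((Nat.fib (6*k+5) - 5)/4 + 1)
      - 3 * DD ((Nat.fib (6*k+5) - 5)/4 + 2*(Nat.fib (6*k+6)/4) + 1)
      + 3 * DD ((Nat.fib (6*k+5) - 5)/4 + 4*(Nat.fib (6*k+6)/4) + 1)
      - DD ((Nat.fib (6*k+5) - 5)/4 + 6*(Nat.fib (6*k+6)/4) + 1)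
      = 2 * (k : ℤ) + 2 := by
  intro k
  induction k with
  | zero =>
    have h5 : Nat.fib 5 = 5 := by norm_num [Nat.fib]
    have h6 : Nat.fib 6 = 8 := by norm_num [Nat.fib]
    norm_num [h5, h6]
    exact_mod_cast base_case
  | succ k ih =>
    obtain ⟨hm5, hm6, hs5, hs6⟩ := fib_facts k
    set a := Nat.fib (6*k+5) with ha
    set b := Nat.fib (6*k+6) with hb
    set d := (a - 5)/4 with hd
    set e := b/4 with he
    have hda : a = 4*d + 5 := by omega
    have heb : b = 4*e := by omega
    have hee : 2 ≤ e := by omega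
    -- next level fib values
    have e5 : 6*(k+1)+5 = (6*k+5) + 6 := by omega
    have e6 : 6*(k+1)+6 = (6*k+5) + 7 := by omega
    have e1 : (6*k+5) + 1 = 6*k+6 := by omega
    have hf5 : Nat.fib (6*(k+1)+5) = 5*a + 8*b := by rw [e5, fib_add6, e1]
    have hf6 : Nat.fib (6*(k+1)+6) = 8*a + 13*b := by rw [e6, fib_add7, e1]
    -- Cassini
    have hcass := cassini (6*k+5)
    rw [e1] at hcass
    have hodd : (-1:ℤ)^(6*k+5) = -1 := Odd.neg_one_pow ⟨3*k+2, by ring⟩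
    rw [hodd] at hcass
    -- hcass : a^2 + a*b - b^2 = 1
    have hC : 4*(d:ℤ)^2 + 4*(d:ℤ)*(e:ℤ) - 4*(e:ℤ)^2 + 10*(d:ℤ) + 5*(e:ℤ) + 6 = 0 := by
      have hda' : (a:ℤ) = 4*(d:ℤ) + 5 := by exact_mod_cast hda
      have heb' : (b:ℤ) = 4*(e:ℤ) := by exact_mod_cast heb
      rw [← ha, ← hb] at hcass
      rw [hda', heb'] at hcass
      nlinarith [hcass]
    have hstep := step d e hee hC
    -- rewrite next-level indices
    have hd' : (Nat.fib (6*(k+1)+5) - 5)/4 = 5*d + 8*e + 5 := by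
      rw [hf5]; omega
    have he' : Nat.fib (6*(k+1)+6)/4 = 8*d + 13*e + 10 := by
      rw [hf6]; omega
    rw [hd', he']
    have p0 : 5*d + 8*e + 5 + 1 = 5*d + 8*e + 6 := by omega
    have p1 : 5*d + 8*e + 5 + 2*(8*d + 13*e + 10) + 1 = 21*d + 34*e + 26 := by omega
    have p2 : 5*d + 8*e + 5 + 4*(8*d + 13*e + 10) + 1 = 37*d + 60*e + 46 := by omega
    have p3 : 5*d + 8*e + 5 + 6*(8*d + 13*e + 10) + 1 = 53*d + 86*e + 66 := by omega
    rw [p0, p1, p2, p3, hstep, ih]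
    push_cast
    ring

theorem fwT_diff_eq_two_n (n : ℕ) (hn : 1 ≤ n) :
    fwT ((Nat.fib (6 * n - 1) - 1) / 4) (Nat.fib (6 * n) / 2) (Nat.fib (6 * n) / 2)
      - fwT ((Nat.fib (6 * n + 2) - 1) / 4) (Nat.fib (6 * n) / 2) (Nat.fib (6 * n) / 2)
      = 2 * (n : ℤ) := by
  obtain ⟨k, rfl⟩ : ∃ k, n = k + 1 := ⟨n - 1, by omega⟩
  obtain ⟨hm5, hm6, hs5, hs6⟩ := fib_facts k
  have i1 : 6*(k+1) - 1 = 6*k+5 := by omega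
  have i2 : 6*(k+1) = 6*k+6 := by omega
  have i3 : 6*(k+1) + 2 = (6*k+6) + 2 := by omega
  rw [i1, i2]
  set a := Nat.fib (6*k+5) with ha
  set b := Nat.fib (6*k+6) with hb
  set d := (a - 5)/4 with hd
  set e := b/4 with he
  have hda : a = 4*d + 5 := by omega
  have heb : b = 4*e := by omega
  -- fib (6k+8) = a + 2b
  have hf8 : Nat.fib ((6*k+6) + 2) = a + 2*b := by
    have t2 : Nat.fib (6*k+7) = a + b := by
      have h := Nat.fib_add_two (n := 6*k+5)
      rw [show 6*k+5+2 = 6*k+7 from by omega, show 6*k+5+1 = 6*k+6 from by omega] at h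
      rw [h, ← ha, ← hb]
    have t1 := Nat.fib_add_two (n := 6*k+6)
    rw [show 6*k+6+1 = 6*k+7 from by omega, t2, ← hb] at t1
    rw [t1]
    ring
  have q1 : (a - 1)/4 = d + 1 := by omega
  have q2 : b/2 = 2*e := by omega
  have q3 : (Nat.fib ((6*k+6)+2) - 1)/4 = d + 2*e + 1 := by rw [hf8]; omega
  rw [q1, q2, q3]
  rw [fwT_eq (d+1) (2*e), fwT_eq (d + 2*e + 1) (2*e)]
  have ih := main_ind k
  have w1 : d + 1 + 2*(2*e) = d + 4*e + 1 := by omega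
  have w2 : d + 1 + 2*e = d + 2*e + 1 := by omega
  have w3 : d + 2*e + 1 + 2*(2*e) = d + 6*e + 1 := by omega
  have w4 : d + 2*e + 1 + 2*e = d + 4*e + 1 := by omega
  rw [w1, w2, w3, w4]
  push_cast
  push_cast at ih
  linarith [ih]
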